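/- For every subset T ⊆ ι, the intersection U ∩ span_k{f_i : i ∈ T} is contained in span_k{f_i − g_i : i ∈ D_Q ∩ T}. (This is the abstract form of Lemma 'Sigma.top': taking T = {S : 1 ∈ S}, so that span{f_i : i ∈ T} contains the image of the weighted coboundary operator δ, one obtains im δ ∩ Q̄ ⊆ span{f_{{1}∪F} − g_{{1}∪F} : 1 ∉ F, {1}∪F ∈ Δ(Q)}.) -/

import Mathlib

/-- Abstract form of Lemma `Sigma.top`:  for every subset `T ⊆ ι`, the intersection
`U ∩ span {f i : i ∈ T}` is contained in `span {f i − g i : i ∈ D_Q ∩ T}`. -/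
theorem sigma_top {k V ι : Type*} [Field k] [AddCommGroup V] [Module k V]
    [Fintype ι] [LinearOrder ι]
    (f : Module.Basis ι k V) (U : Submodule k V)
    (DL DQ : Set ι)
    (hDL : DL = {i : ι | f i ∉ U ⊔ Submodule.span k (f '' {j : ι | j < i})})
    (hDQ : DQ = DLᶜ)
    (g : ι → V)
    (hg : ∀ i ∈ DQ, g i ∈ Submodule.span k (f '' {j : ι | j ∈ DL ∧ j < i}) ∧ f i - g i ∈ U) :
    ∀ T : Set ι,
      U ⊓ Submodule.span k (f '' T) ≤
        Submodule.span k ((fun i : ι => f i - g i) '' (DQ ∩ T)) := by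
  classical
  have key : ∀ m : WithBot ι, ∀ u, u ∈ U → (f.repr u).support.max ≤ m →
      u ∈ Submodule.span k ((fun i : ι => f i - g i) '' (DQ ∩ ↑(f.repr u).support)) := by
    intro m
    induction m using WellFoundedLT.induction with
    | _ m ih =>
      intro u hu hm
      rcases eq_or_ne ((f.repr u).support) ∅ with hs | hs
      · have h0 : f.repr u = 0 := Finsupp.support_eq_empty.mp hs
        have hu0 : u = 0 := by
          have := congrArg f.repr.symm h0
          simpa using this
        simp [hu0]
      · have hne : (f.repr u).support.Nonempty := Finset.nonempty_of_ne_empty hs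
        set c := f.repr u with hc
        set M := c.support.max' hne with hM
        have hMs : M ∈ c.support := Finset.max'_mem _ _
        have hcM : c M ≠ 0 := Finsupp.mem_support_iff.mp hMs
        -- the lower part
        have hlow : u - c M • f M ∈ Submodule.span k (f '' {j : ι | j < M}) := by
          rw [Module.Basis.mem_span_image]
          intro j hj
          simp only [Finset.mem_coe, Finsupp.mem_support_iff] at hj
          have hval : f.repr (u - c M • f M) j
              = c j - (Finsupp.single M (c M)) j := by
            simp only [map_sub, map_smul, Finsupp.sub_apply, Finsupp.smul_apply,
              Module.Basis.repr_self, smul_eq_mul, hc]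
            rcases eq_or_ne j M with rfl | h
            · simp
            · simp [Finsupp.single_eq_of_ne' (Ne.symm h)]
          rcases eq_or_ne j M with rfl | hjM
          · exfalso
            apply hj
            rw [hval]
            simp
          · have hjs : j ∈ c.support := by
              rw [Finsupp.mem_support_iff]
              intro h
              apply hj
              simpa [hval, Finsupp.single_eq_of_ne' (Ne.symm hjM)] using h
            exact lt_of_le_of_ne (Finset.le_max' _ _ hjs) hjM
        -- M ∈ DQ
        have hMDQ : M ∈ DQ := by
          rw [hDQ, Set.mem_compl_iff, hDL, Set.mem_setOf_eq, not_not]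
          have hfM : f M = (c M)⁻¹ • u + (-(c M)⁻¹) • (u - c M • f M) := by
            match_scalars <;> field_simp <;> ring
          rw [hfM]
          exact Submodule.add_mem _
            (Submodule.mem_sup_left (Submodule.smul_mem _ _ hu))
            (Submodule.mem_sup_right (Submodule.smul_mem _ _ hlow))
        obtain ⟨hgsp, hgU⟩ := hg M hMDQ
        set u' := u - c M • (f M - g M) with hu'def
        have hu'U : u' ∈ U := Submodule.sub_mem _ hu (Submodule.smul_mem _ _ hgU)
        have hgsupp : ↑(f.repr (g M)).support ⊆ {j : ι | j ∈ DL ∧ j < M} :=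
          (Module.Basis.mem_span_image _).mp hgsp
        -- support of u'
        have hsupp : ∀ j ∈ (f.repr u').support,
            (j ∈ c.support ∧ j ≠ M ∧ j < M) ∨ (j ∈ DL ∧ j < M) := by
          intro j hj
          have heq : u' = (u - c M • f M) + c M • g M := by
            rw [hu'def, smul_sub]; abel
          have hsub : (f.repr u').support ⊆
              (f.repr (u - c M • f M)).support ∪ (f.repr (c M • g M)).support := by
            rw [heq, map_add]
            exact Finsupp.support_add
          rcases Finset.mem_union.mp (hsub hj) with h1 | h2
          · left
            have hval : f.repr (u - c M • f M) j
                = c j - (Finsupp.single M (c M)) j := by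
              simp only [map_sub, map_smul, Finsupp.sub_apply, Finsupp.smul_apply,
                Module.Basis.repr_self, smul_eq_mul, hc]
              rcases eq_or_ne j M with rfl | h
              · simp
              · simp [Finsupp.single_eq_of_ne' (Ne.symm h)]
            rw [Finsupp.mem_support_iff] at h1
            rcases eq_or_ne j M with rfl | hjM
            · exfalso; apply h1; rw [hval]; simp
            · have hjs : j ∈ c.support := by
                rw [Finsupp.mem_support_iff]
                intro h
                apply h1
                simpa [hval, Finsupp.single_eq_of_ne' (Ne.symm hjM)] using h
              exact ⟨hjs, hjM, lt_of_le_of_ne (Finset.le_max' _ _ hjs) hjM⟩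
          · right
            have : j ∈ (f.repr (g M)).support := by
              have hss : (f.repr (c M • g M)).support ⊆ (f.repr (g M)).support := by
                rw [map_smul]
                exact Finsupp.support_smul
              exact hss h2
            exact hgsupp this
        have hmaxlt : (f.repr u').support.max < (M : WithBot ι) := by
          rcases eq_or_ne ((f.repr u').support) ∅ with he | hne'
          · rw [he, Finset.max_empty]
            exact WithBot.bot_lt_coe M
          · have hne'' : (f.repr u').support.Nonempty := Finset.nonempty_of_ne_empty hne'
            rw [← Finset.coe_max' hne'']
            have := hsupp _ (Finset.max'_mem _ hne'')
            rcases this with ⟨_, _, h⟩ | ⟨_, h⟩ <;> exact WithBot.coe_lt_coe.mpr h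
        have hMm : (M : WithBot ι) ≤ m := by
          rw [hM, Finset.coe_max' hne]
          exact hm
        have hu'mem := ih _ (lt_of_lt_of_le hmaxlt hMm) u' hu'U le_rfl
        have hsub2 : DQ ∩ ↑(f.repr u').support ⊆ DQ ∩ ↑c.support := by
          rintro j ⟨hjDQ, hjs⟩
          refine ⟨hjDQ, ?_⟩
          rcases hsupp j hjs with ⟨h, _, _⟩ | ⟨hDLj, _⟩
          · exact h
          · exfalso
            rw [hDQ] at hjDQ
            exact hjDQ hDLj
        have hu'mem' : u' ∈ Submodule.span k ((fun i : ι => f i - g i) '' (DQ ∩ ↑c.support)) :=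
          Submodule.span_mono (Set.image_mono hsub2) hu'mem
        have hfinal : u = u' + c M • (f M - g M) := by rw [hu'def]; abel
        rw [hfinal]
        exact Submodule.add_mem _ hu'mem'
          (Submodule.smul_mem _ _ (Submodule.subset_span ⟨M, ⟨hMDQ, hMs⟩, rfl⟩))
  intro T x hx
  obtain ⟨hxU, hxT⟩ := hx
  have hsupp : ↑(f.repr x).support ⊆ T := (Module.Basis.mem_span_image _).mp hxT
  have := key ((f.repr x).support.max) x hxU le_rfl
  exact Submodule.span_mono (Set.image_mono (Set.inter_subset_inter_right _ hsupp)) this
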